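/- Let Q be a class of squares in Cat satisfying CS3h (local descent) and CI2g (all comma squares D^g_{u,b} are in Q). Then Q contains every cartesian square (commutative, with A' ≅ B' ×_B A) whose bottom edge w : B' → B is a discrete fibration. -/

import Mathlib

open CategoryTheory

universe u

namespace Paper

/-- A class of functors between small categories. -/
abbrev FunctorClass : Type (u + 1) :=
  ∀ ⦃A B : Type u⦄ [SmallCategory A] [SmallCategory B], (A ⥤ B) → Prop

/-- The punctual category `e`. -/
abbrev PtCat : Type u := Discrete PUnit.{u + 1}

/-- The category `A` is `W`-aspherical: the functor `A ⥤ e` lies in `W`. -/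
def IsAsphericalCat (W : FunctorClass.{u}) (A : Type u) [SmallCategory A] : Prop :=
  W (Functor.star A)

/-- The functor `F : A ⥤ B` is `W`-aspherical: every comma category `A/b` is `W`-aspherical. -/
def IsAsphericalFunctor (W : FunctorClass.{u}) {A B : Type u} [SmallCategory A]
    [SmallCategory B] (F : A ⥤ B) : Prop :=
  ∀ b : B, IsAsphericalCat W (CostructuredArrow F b)

/-- The functor `F : A ⥤ B` is `W`-coaspherical: every comma category `b\A` is `W`-aspherical. -/
def IsCoasphericalFunctor (W : FunctorClass.{u}) {A B : Type u} [SmallCategory A]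
    [SmallCategory B] (F : A ⥤ B) : Prop :=
  ∀ b : B, IsAsphericalCat W (StructuredArrow b F)

/-- For `F : A ⥤ B` and `b : B`, the induced functor `A/b ⥤ B/b`. -/
def sliceInduced {A B : Type u} [SmallCategory A] [SmallCategory B] (F : A ⥤ B) (b : B) :
    CostructuredArrow F b ⥤ Over b where
  obj x := Over.mk x.hom
  map {x y} f := Over.homMk (F.map f.left) (by simp [CostructuredArrow.w f])

/-- For a strictly commutative triangle given by `F : A ⥤ B`, `G : B ⥤ C` and `c : C`,
the induced functor `A/c ⥤ B/c`. -/
def triangleSlice {A B C : Type u} [SmallCategory A] [SmallCategory B] [SmallCategory C]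
    (F : A ⥤ B) (G : B ⥤ C) (c : C) :
    CostructuredArrow (F ⋙ G) c ⥤ CostructuredArrow G c where
  obj x := CostructuredArrow.mk (Y := F.obj x.left) x.hom
  map {x y} f := CostructuredArrow.homMk (F.map f.left) (CostructuredArrow.w f)

/-- For a strictly commutative triangle given by `F : A ⥤ B`, `G : B ⥤ C` and `c : C`,
the induced functor `c\A ⥤ c\B`. -/
def triangleCoslice {A B C : Type u} [SmallCategory A] [SmallCategory B] [SmallCategory C]
    (F : A ⥤ B) (G : B ⥤ C) (c : C) :
    StructuredArrow c (F ⋙ G) ⥤ StructuredArrow c G where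
  obj x := StructuredArrow.mk (Y := F.obj x.right) x.hom
  map {x y} f := StructuredArrow.homMk (F.map f.right) (StructuredArrow.w f)


/-- `W` is a weak fundamental localizer. -/
structure IsWeakFundamentalLocalizer (W : FunctorClass.{u}) : Prop where
  id_mem : ∀ (A : Type u) [SmallCategory A], W (𝟭 A)
  comp_mem : ∀ {A B C : Type u} [SmallCategory A] [SmallCategory B] [SmallCategory C]
      (F : A ⥤ B) (G : B ⥤ C), W F → W G → W (F ⋙ G)
  of_comp_left : ∀ {A B C : Type u} [SmallCategory A] [SmallCategory B] [SmallCategory C]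
      (F : A ⥤ B) (G : B ⥤ C), W F → W (F ⋙ G) → W G
  of_comp_right : ∀ {A B C : Type u} [SmallCategory A] [SmallCategory B] [SmallCategory C]
      (F : A ⥤ B) (G : B ⥤ C), W G → W (F ⋙ G) → W F
  retract_mem : ∀ {A A' : Type u} [SmallCategory A] [SmallCategory A']
      (i : A' ⥤ A) (r : A ⥤ A'), i ⋙ r = 𝟭 A' → W (r ⋙ i) → W r
  star_mem : ∀ (A : Type u) [SmallCategory A], Limits.HasTerminal A → W (Functor.star A)
  mem_of_slices : ∀ {A B : Type u} [SmallCategory A] [SmallCategory B] (F : A ⥤ B),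
      (∀ b : B, W (sliceInduced F b)) → W F

/-- `W` is a fundamental localizer. -/
structure IsFundamentalLocalizer (W : FunctorClass.{u}) : Prop where
  id_mem : ∀ (A : Type u) [SmallCategory A], W (𝟭 A)
  comp_mem : ∀ {A B C : Type u} [SmallCategory A] [SmallCategory B] [SmallCategory C]
      (F : A ⥤ B) (G : B ⥤ C), W F → W G → W (F ⋙ G)
  of_comp_left : ∀ {A B C : Type u} [SmallCategory A] [SmallCategory B] [SmallCategory C]
      (F : A ⥤ B) (G : B ⥤ C), W F → W (F ⋙ G) → W G
  of_comp_right : ∀ {A B C : Type u} [SmallCategory A] [SmallCategory B] [SmallCategory C]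
      (F : A ⥤ B) (G : B ⥤ C), W G → W (F ⋙ G) → W F
  retract_mem : ∀ {A A' : Type u} [SmallCategory A] [SmallCategory A']
      (i : A' ⥤ A) (r : A ⥤ A'), i ⋙ r = 𝟭 A' → W (r ⋙ i) → W r
  star_mem : ∀ (A : Type u) [SmallCategory A], Limits.HasTerminal A → W (Functor.star A)
  mem_of_rel_slices : ∀ {A B C : Type u} [SmallCategory A] [SmallCategory B] [SmallCategory C]
      (F : A ⥤ B) (G : B ⥤ C), (∀ c : C, W (triangleSlice F G c)) → W F


section Squares

variable {A A' B B' : Type u} [SmallCategory A] [SmallCategory A']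
  [SmallCategory B] [SmallCategory B']

/-- The functor `A'/b' ⥤ A/w(b')` induced by a square `(u, u', v, w, α)`. -/
def squareSlice (u : A ⥤ B) (u' : A' ⥤ B') (v : A' ⥤ A) (w : B' ⥤ B)
    (α : v ⋙ u ⟶ u' ⋙ w) (b' : B') :
    CostructuredArrow u' b' ⥤ CostructuredArrow u (w.obj b') where
  obj x := CostructuredArrow.mk (Y := v.obj x.left) (α.app x.left ≫ w.map x.hom)
  map {x y} f := CostructuredArrow.homMk (v.map f.left) (by
    have h := α.naturality f.left
    dsimp at h ⊢
    rw [← Category.assoc, h, Category.assoc, ← Functor.map_comp, CostructuredArrow.w f])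

/-- The functor `a\A' ⥤ u(a)\B'` induced by a square `(u, u', v, w, α)`. -/
def squareCoslice (u : A ⥤ B) (u' : A' ⥤ B') (v : A' ⥤ A) (w : B' ⥤ B)
    (α : v ⋙ u ⟶ u' ⋙ w) (a : A) :
    StructuredArrow a v ⥤ StructuredArrow (u.obj a) w where
  obj x := StructuredArrow.mk (Y := u'.obj x.right) (u.map x.hom ≫ α.app x.right)
  map {x y} f := StructuredArrow.homMk (u'.map f.right) (by
    have h := α.naturality f.right
    dsimp at h ⊢
    rw [Category.assoc, ← h, ← Category.assoc, ← Functor.map_comp, StructuredArrow.w f])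

/-- The category `A'_{(a, b', g)}` attached to a square `(u, u', v, w, α)` and a triple
`(a, b', g : u(a) ⟶ w(b'))`. -/
structure SquareFiber (u : A ⥤ B) (u' : A' ⥤ B') (v : A' ⥤ A) (w : B' ⥤ B)
    (α : v ⋙ u ⟶ u' ⋙ w) (a : A) (b' : B') (g : u.obj a ⟶ w.obj b') : Type u where
  pt : A'
  f : a ⟶ v.obj pt
  g' : u'.obj pt ⟶ b'
  fac : u.map f ≫ α.app pt ≫ w.map g' = g

instance (u : A ⥤ B) (u' : A' ⥤ B') (v : A' ⥤ A) (w : B' ⥤ B)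
    (α : v ⋙ u ⟶ u' ⋙ w) (a : A) (b' : B') (g : u.obj a ⟶ w.obj b') :
    Category (SquareFiber u u' v w α a b' g) where
  Hom x y := { h : x.pt ⟶ y.pt // x.f ≫ v.map h = y.f ∧ u'.map h ≫ y.g' = x.g' }
  id x := ⟨𝟙 x.pt, by simp, by simp⟩
  comp {x y z} f g := ⟨f.1 ≫ g.1, by
      rw [Functor.map_comp, ← Category.assoc, f.2.1, g.2.1], by
      rw [Functor.map_comp, Category.assoc, g.2.2, f.2.2]⟩
  id_comp f := by apply Subtype.ext; simp
  comp_id f := by apply Subtype.ext; simp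
  assoc f g h := by apply Subtype.ext; simp

/-- A square `(u, u', v, w, α)` is `W`-exact. -/
def IsExactSquare (W : FunctorClass.{u}) (u : A ⥤ B) (u' : A' ⥤ B') (v : A' ⥤ A)
    (w : B' ⥤ B) (α : v ⋙ u ⟶ u' ⋙ w) : Prop :=
  ∀ b' : B', IsCoasphericalFunctor W (squareSlice u u' v w α b')

/-- The 2-cell of the opposite square. -/
def squareOpCell (u : A ⥤ B) (u' : A' ⥤ B') (v : A' ⥤ A) (w : B' ⥤ B)
    (α : v ⋙ u ⟶ u' ⋙ w) : u'.op ⋙ w.op ⟶ v.op ⋙ u.op :=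
  NatTrans.op α

end Squares

section Comps

/-- The 2-cell of the horizontal composite of two squares. -/
def hcomp2cell {A A' A'' B B' B'' : Type u}
    [SmallCategory A] [SmallCategory A'] [SmallCategory A'']
    [SmallCategory B] [SmallCategory B'] [SmallCategory B'']
    {u : A ⥤ B} {u' : A' ⥤ B'} {u'' : A'' ⥤ B''}
    {v : A' ⥤ A} {w : B' ⥤ B} {v' : A'' ⥤ A'} {w' : B'' ⥤ B'}
    (α : v ⋙ u ⟶ u' ⋙ w) (α' : v' ⋙ u' ⟶ u'' ⋙ w') :
    (v' ⋙ v) ⋙ u ⟶ u'' ⋙ (w' ⋙ w) :=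
  Functor.whiskerLeft v' α ≫ Functor.whiskerRight α' w

/-- The 2-cell of the vertical composite of two squares. -/
def vcomp2cell {A A' B B' C C' : Type u}
    [SmallCategory A] [SmallCategory A'] [SmallCategory B] [SmallCategory B']
    [SmallCategory C] [SmallCategory C']
    {u : A ⥤ B} {u' : A' ⥤ B'} {v : A' ⥤ A} {w : B' ⥤ B}
    {x : B ⥤ C} {x' : B' ⥤ C'} {y : C' ⥤ C}
    (α : v ⋙ u ⟶ u' ⋙ w) (β : w ⋙ x ⟶ x' ⋙ y) :
    v ⋙ (u ⋙ x) ⟶ (u' ⋙ x') ⋙ y :=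
  Functor.whiskerRight α x ≫ Functor.whiskerLeft u' β

end Comps

section Fibers

variable {A B : Type u} [SmallCategory A] [SmallCategory B]

/-- The fiber `A_b` of `F : A ⥤ B` at `b : B`. -/
structure CatFiber (F : A ⥤ B) (b : B) : Type u where
  obj : A
  eq : F.obj obj = b

instance (F : A ⥤ B) (b : B) : Category (CatFiber F b) where
  Hom x y := { f : x.obj ⟶ y.obj // F.map f = eqToHom (x.eq.trans y.eq.symm) }
  id x := ⟨𝟙 x.obj, by simp⟩
  comp {x y z} f g := ⟨f.1 ≫ g.1, by rw [Functor.map_comp, f.2, g.2, eqToHom_trans]⟩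
  id_comp f := by apply Subtype.ext; simp
  comp_id f := by apply Subtype.ext; simp
  assoc f g h := by apply Subtype.ext; simp

/-- The canonical functor `A_b ⥤ A/b`. -/
def fiberToSlice (F : A ⥤ B) (b : B) : CatFiber F b ⥤ CostructuredArrow F b where
  obj x := CostructuredArrow.mk (Y := x.obj) (eqToHom x.eq)
  map {x y} f := CostructuredArrow.homMk f.1 (by simp [f.2])

/-- The canonical functor `A_b ⥤ b\A`. -/
def fiberToCoslice (F : A ⥤ B) (b : B) : CatFiber F b ⥤ StructuredArrow b F where
  obj x := StructuredArrow.mk (Y := x.obj) (eqToHom x.eq.symm)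
  map {x y} f := StructuredArrow.homMk f.1 (by simp [f.2])

/-- The functor `F` is `W`-proper. -/
def IsProper (W : FunctorClass.{u}) (F : A ⥤ B) : Prop :=
  ∀ b : B, IsCoasphericalFunctor W (fiberToSlice F b)

/-- The functor `F` is `W`-smooth. -/
def IsSmooth (W : FunctorClass.{u}) (F : A ⥤ B) : Prop :=
  ∀ b : B, IsAsphericalFunctor W (fiberToCoslice F b)

/-- The functor `F` is a precofibration: each canonical functor `A_b ⥤ A/b` admits a left
adjoint. -/
def IsPrecofibration (F : A ⥤ B) : Prop :=
  ∀ b : B, (fiberToSlice F b).IsRightAdjoint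

end Fibers

/-- `F` is an isomorphism of categories. -/
def IsCatIso {A B : Type u} [SmallCategory A] [SmallCategory B] (F : A ⥤ B) : Prop :=
  ∃ G : B ⥤ A, F ⋙ G = 𝟭 A ∧ G ⋙ F = 𝟭 B

section Pullback

variable {A B B' : Type u} [SmallCategory A] [SmallCategory B] [SmallCategory B']

/-- The strict pullback `B' ×_B A` of `u : A ⥤ B` and `w : B' ⥤ B`. -/
structure CatPullback (u : A ⥤ B) (w : B' ⥤ B) : Type u where
  fst : B'
  snd : A
  eq : w.obj fst = u.obj snd

instance (u : A ⥤ B) (w : B' ⥤ B) : Category (CatPullback u w) where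
  Hom x y := { p : (x.fst ⟶ y.fst) × (x.snd ⟶ y.snd) //
    w.map p.1 ≫ eqToHom y.eq = eqToHom x.eq ≫ u.map p.2 }
  id x := ⟨(𝟙 x.fst, 𝟙 x.snd), by simp⟩
  comp {x y z} f g := ⟨(f.1.1 ≫ g.1.1, f.1.2 ≫ g.1.2), by
    rw [Functor.map_comp, Functor.map_comp, Category.assoc, g.2, ← Category.assoc, f.2,
      Category.assoc]⟩
  id_comp f := by apply Subtype.ext; simp
  comp_id f := by apply Subtype.ext; simp
  assoc f g h := by apply Subtype.ext; simp

/-- First projection of the strict pullback. -/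
def pbFst (u : A ⥤ B) (w : B' ⥤ B) : CatPullback u w ⥤ B' where
  obj x := x.fst
  map f := f.1.1

/-- Second projection of the strict pullback. -/
def pbSnd (u : A ⥤ B) (w : B' ⥤ B) : CatPullback u w ⥤ A where
  obj x := x.snd
  map f := f.1.2

theorem pb_comm (u : A ⥤ B) (w : B' ⥤ B) : pbSnd u w ⋙ u = pbFst u w ⋙ w := by
  have hobj : ∀ x : CatPullback u w, (pbSnd u w ⋙ u).obj x = (pbFst u w ⋙ w).obj x :=
    fun x => x.eq.symm
  refine CategoryTheory.Functor.ext hobj (fun x y f => ?_)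
  have h := f.2
  dsimp only [Functor.comp_map, pbFst, pbSnd]
  rw [h]
  have key : ∀ {X Z Y : B} (p : X = Z) (q : Z = X) (g : X ⟶ Y), g = eqToHom p ≫ eqToHom q ≫ g := by
    intros; simp
  exact key _ _ _

/-- The comparison functor from the top-left corner of a commutative square to the
strict pullback. -/
def toPullback {A' : Type u} [SmallCategory A'] (u : A ⥤ B) (u' : A' ⥤ B') (v : A' ⥤ A)
    (w : B' ⥤ B) (h : v ⋙ u = u' ⋙ w) : A' ⥤ CatPullback u w where
  obj a' := ⟨u'.obj a', v.obj a', (Functor.congr_obj h a').symm⟩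
  map {x y} f := ⟨(u'.map f, v.map f), by
    have := Functor.congr_hom h f
    dsimp at this
    rw [this]
    simp⟩
  map_id x := by
    apply Subtype.ext
    show (u'.map (𝟙 x), v.map (𝟙 x)) = (𝟙 _, 𝟙 _)
    simp
  map_comp f g := by
    apply Subtype.ext
    show (u'.map _, v.map _) = (u'.map _ ≫ u'.map _, v.map _ ≫ v.map _)
    simp

end Pullback

section BaseChange

variable {A A' B B' : Type u} [SmallCategory A] [SmallCategory A']
  [SmallCategory B] [SmallCategory B']

/-- The base-change morphism `v ∘ r' ⟶ r ∘ w` associated with a square whose vertical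
edges admit right adjoints. -/
def baseChangeR {u : A ⥤ B} {u' : A' ⥤ B'} {v : A' ⥤ A} {w : B' ⥤ B}
    {r : B ⥤ A} {r' : B' ⥤ A'} (adj : u ⊣ r) (adj' : u' ⊣ r')
    (α : v ⋙ u ⟶ u' ⋙ w) : r' ⋙ v ⟶ w ⋙ r :=
  Functor.whiskerLeft (r' ⋙ v) adj.unit ≫ Functor.whiskerLeft r' (Functor.whiskerRight α r) ≫
    Functor.whiskerRight adj'.counit (w ⋙ r)

/-- The base-change morphism `w'' ∘ u ⟶ u' ∘ v''` associated with a square whose horizontal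
edges admit left adjoints. -/
def baseChangeL {u : A ⥤ B} {u' : A' ⥤ B'} {v : A' ⥤ A} {w : B' ⥤ B}
    {v'' : A ⥤ A'} {w'' : B ⥤ B'} (adjv : v'' ⊣ v) (adjw : w'' ⊣ w)
    (α : v ⋙ u ⟶ u' ⋙ w) : u ⋙ w'' ⟶ v'' ⋙ u' :=
  Functor.whiskerRight adjv.unit (u ⋙ w'') ≫ Functor.whiskerLeft v'' (Functor.whiskerRight α w'') ≫
    Functor.whiskerLeft (v'' ⋙ u') adjw.counit

end BaseChange

section LocColoc

variable {X Y C : Type u} [SmallCategory X] [SmallCategory Y] [SmallCategory C]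

/-- `F : X ⥤ Y`, viewed over `C` via `P : Y ⥤ C` (and `F ⋙ P` on `X`), is a `W`-equivalence
locally on `C`. -/
def IsLocallyEquiv (W : FunctorClass.{u}) (F : X ⥤ Y) (P : Y ⥤ C) : Prop :=
  ∀ c : C, W (triangleSlice F P c)

/-- `F : X ⥤ Y`, viewed over `C` via `P : Y ⥤ C` (and `F ⋙ P` on `X`), is a `W`-equivalence
colocally on `C`. -/
def IsColocallyEquiv (W : FunctorClass.{u}) (F : X ⥤ Y) (P : Y ⥤ C) : Prop :=
  ∀ c : C, W (triangleCoslice F P c)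

end LocColoc

/-- A square `(u, u', v, w, α)` is weakly `W`-exact. -/
def IsWeakExactSquare (W : FunctorClass.{u}) {A A' B B' : Type u} [SmallCategory A]
    [SmallCategory A'] [SmallCategory B] [SmallCategory B'] (u : A ⥤ B) (u' : A' ⥤ B')
    (v : A' ⥤ A) (w : B' ⥤ B) (α : v ⋙ u ⟶ u' ⋙ w) : Prop :=
  ∀ b' : B', IsColocallyEquiv W (squareSlice u u' v w α b') (CostructuredArrow.proj u (w.obj b'))

/-- `w : B' ⥤ B` is a discrete fibration. -/
def IsDiscreteFibration {B' B : Type u} [SmallCategory B'] [SmallCategory B]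
    (w : B' ⥤ B) : Prop :=
  ∀ (b' : B') (b : B) (g : b ⟶ w.obj b'),
    ∃! p : Σ b₀ : B', b₀ ⟶ b', ∃ h : w.obj p.1 = b, w.map p.2 = eqToHom h ≫ g

/-- The coarse fundamental localizer: functors whose source and target are both empty or
both nonempty. -/
def coarseLocalizer : FunctorClass.{u} :=
  @fun A B _ _ _ => Nonempty A ↔ Nonempty B

/-- The map induced on sets of connected components. -/
def π₀map {A B : Type u} [SmallCategory A] [SmallCategory B] (F : A ⥤ B) :
    ConnectedComponents A → ConnectedComponents B :=
  F.mapConnectedComponents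

/-- The fundamental localizer `W₀` of `0`-equivalences: functors inducing a bijection on
connected components. -/
def W₀ : FunctorClass.{u} :=
  @fun _ _ _ _ F => Function.Bijective (π₀map F)

/-- A square in `Cat`: four small categories, four functors and a `2`-cell
`α : u ∘ v ⟶ w ∘ u'`. -/
structure CatSquare : Type (u + 1) where
  {A' : Type u}
  {A : Type u}
  {B' : Type u}
  {B : Type u}
  [instA' : SmallCategory A']
  [instA : SmallCategory A]
  [instB' : SmallCategory B']
  [instB : SmallCategory B]
  u : A ⥤ B
  u' : A' ⥤ B'
  v : A' ⥤ A
  w : B' ⥤ B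
  α : v ⋙ u ⟶ u' ⋙ w

attribute [instance] CatSquare.instA' CatSquare.instA CatSquare.instB' CatSquare.instB

/-- A bundled square is `W`-exact. -/
def CatSquare.IsExact (W : FunctorClass.{u}) (S : CatSquare.{u}) : Prop :=
  IsExactSquare W S.u S.u' S.v S.w S.α

/-- The opposite of a square. -/
def CatSquare.op (S : CatSquare.{u}) : CatSquare.{u} :=
  ⟨S.w.op, S.v.op, S.u'.op, S.u.op, squareOpCell S.u S.u' S.v S.w S.α⟩

/-- The comma square associated with `u : A ⥤ B` and `w : B' ⥤ B`. -/
def commaSquare {A B B' : Type u} [SmallCategory A] [SmallCategory B] [SmallCategory B']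
    (u : A ⥤ B) (w : B' ⥤ B) : CatSquare.{u} :=
  ⟨u, Comma.snd u w, Comma.fst u w, w, Comma.natTrans u w⟩

/-- The comma square `D^g_{u, b}` of `u : A ⥤ B` at an object `b : B`. -/
def commaObjSquare {A B : Type u} [SmallCategory A] [SmallCategory B] (u : A ⥤ B) (b : B) :
    CatSquare.{u} :=
  commaSquare u (Functor.fromPUnit.{u} b)

/-- The dual comma square `D^d_{v, a}` of `v : A' ⥤ A` at an object `a : A`. -/
def commaObjSquareD {A' A : Type u} [SmallCategory A'] [SmallCategory A] (v : A' ⥤ A)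
    (a : A) : CatSquare.{u} :=
  commaSquare (Functor.fromPUnit.{u} a) v

/-- The square with top edge `F : A ⥤ B`, the canonical functors `A ⥤ e`, `B ⥤ e` as
vertical edges, identity bottom edge and identity `2`-cell. -/
def starSquare {A B : Type u} [SmallCategory A] [SmallCategory B] (F : A ⥤ B) :
    CatSquare.{u} :=
  ⟨Functor.star B, Functor.star A, F, 𝟭 (PtCat.{u}), 𝟙 (F ⋙ Functor.star B)⟩

/-- The square with all four corners of the form `(A, e, e, e)`, canonical edges and
identity `2`-cell. -/
def ptSquare (A : Type u) [SmallCategory A] : CatSquare.{u} :=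
  ⟨𝟭 (PtCat.{u}), Functor.star A, Functor.star A, 𝟭 (PtCat.{u}), 𝟙 (Functor.star A)⟩

/-- `Q` is stable under horizontal composition of squares (condition CS1h). -/
def StableHComp (Q : CatSquare.{u} → Prop) : Prop :=
  ∀ {A A' A'' B B' B'' : Type u}
    [SmallCategory A] [SmallCategory A'] [SmallCategory A'']
    [SmallCategory B] [SmallCategory B'] [SmallCategory B'']
    (u : A ⥤ B) (u' : A' ⥤ B') (u'' : A'' ⥤ B'')
    (v : A' ⥤ A) (w : B' ⥤ B) (v' : A'' ⥤ A') (w' : B'' ⥤ B')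
    (α : v ⋙ u ⟶ u' ⋙ w) (α' : v' ⋙ u' ⟶ u'' ⋙ w'),
    Q ⟨u, u', v, w, α⟩ → Q ⟨u', u'', v', w', α'⟩ →
    Q ⟨u, u'', v' ⋙ v, w' ⋙ w, hcomp2cell α α'⟩

/-- `Q` is stable under vertical composition of squares (condition CS1v). -/
def StableVComp (Q : CatSquare.{u} → Prop) : Prop :=
  ∀ {A A' B B' C C' : Type u}
    [SmallCategory A] [SmallCategory A'] [SmallCategory B] [SmallCategory B']
    [SmallCategory C] [SmallCategory C']
    (u : A ⥤ B) (u' : A' ⥤ B') (v : A' ⥤ A) (w : B' ⥤ B)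
    (x : B ⥤ C) (x' : B' ⥤ C') (y : C' ⥤ C)
    (α : v ⋙ u ⟶ u' ⋙ w) (β : w ⋙ x ⟶ x' ⋙ y),
    Q ⟨u, u', v, w, α⟩ → Q ⟨x, x', w, y, β⟩ →
    Q ⟨u ⋙ x, u' ⋙ x', v, y, vcomp2cell α β⟩

/-- `Q` satisfies horizontal descent (condition CS2h). -/
def HorizontalDescent (Q : CatSquare.{u} → Prop) : Prop :=
  ∀ {A A' B B' : Type u}
    [SmallCategory A] [SmallCategory A'] [SmallCategory B] [SmallCategory B']
    (u : A ⥤ B) (u' : A' ⥤ B') (v : A' ⥤ A) (w : B' ⥤ B) (α : v ⋙ u ⟶ u' ⋙ w)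
    (J : Type u) (Aj Bj : J → Type u)
    [∀ j, SmallCategory (Aj j)] [∀ j, SmallCategory (Bj j)]
    (uj : ∀ j, Aj j ⥤ Bj j) (vj : ∀ j, Aj j ⥤ A') (wj : ∀ j, Bj j ⥤ B')
    (αj : ∀ j, vj j ⋙ u' ⟶ uj j ⋙ wj j),
    (∀ b' : B', ∃ j, ∃ b : Bj j, (wj j).obj b = b') →
    (∀ j, Q ⟨u', uj j, vj j, wj j, αj j⟩) →
    (∀ j, Q ⟨u, uj j, vj j ⋙ v, wj j ⋙ w, hcomp2cell α (αj j)⟩) →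
    Q ⟨u, u', v, w, α⟩

/-- `Q` satisfies local descent (condition CS3h). -/
def LocalDescent (Q : CatSquare.{u} → Prop) : Prop :=
  ∀ {A A' B B' : Type u}
    [SmallCategory A] [SmallCategory A'] [SmallCategory B] [SmallCategory B']
    (u : A ⥤ B) (u' : A' ⥤ B') (v : A' ⥤ A) (w : B' ⥤ B) (α : v ⋙ u ⟶ u' ⋙ w),
    (∀ b' : B', Q ⟨u, Comma.snd u' (Functor.fromPUnit.{u} b'),
        Comma.fst u' (Functor.fromPUnit.{u} b') ⋙ v, Functor.fromPUnit.{u} b' ⋙ w,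
        hcomp2cell α (Comma.natTrans u' (Functor.fromPUnit.{u} b'))⟩) →
    Q ⟨u, u', v, w, α⟩

/-- `Q` satisfies colocal descent (condition CS3v). -/
def ColocalDescent (Q : CatSquare.{u} → Prop) : Prop :=
  ∀ {A A' B B' : Type u}
    [SmallCategory A] [SmallCategory A'] [SmallCategory B] [SmallCategory B']
    (u : A ⥤ B) (u' : A' ⥤ B') (v : A' ⥤ A) (w : B' ⥤ B) (α : v ⋙ u ⟶ u' ⋙ w),
    (∀ a : A, Q ⟨Functor.fromPUnit.{u} a ⋙ u,
        Comma.snd (Functor.fromPUnit.{u} a) v ⋙ u',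
        Comma.fst (Functor.fromPUnit.{u} a) v, w,
        vcomp2cell (Comma.natTrans (Functor.fromPUnit.{u} a) v) α⟩) →
    Q ⟨u, u', v, w, α⟩

/-- `Q` is stable under passing to opposite squares (condition CS4). -/
def OpStable (Q : CatSquare.{u} → Prop) : Prop :=
  ∀ S : CatSquare.{u}, Q S → Q S.op

/-- Isomorphism of squares. -/
def CatSquare.Isomorphic (S T : CatSquare.{u}) : Prop :=
  ∃ (eA' : S.A' ⥤ T.A') (eA : S.A ⥤ T.A) (eB' : S.B' ⥤ T.B') (eB : S.B ⥤ T.B)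
    (_ : IsCatIso eA') (_ : IsCatIso eA) (_ : IsCatIso eB') (_ : IsCatIso eB)
    (hv : S.v ⋙ eA = eA' ⋙ T.v) (hu : S.u ⋙ eB = eA ⋙ T.u)
    (hu' : S.u' ⋙ eB' = eA' ⋙ T.u') (hw : S.w ⋙ eB = eB' ⋙ T.w),
    Functor.whiskerRight S.α eB =
      eqToHom (by rw [Functor.assoc, hu, ← Functor.assoc, hv, Functor.assoc]) ≫
        Functor.whiskerLeft eA' T.α ≫
        eqToHom (by rw [← Functor.assoc, ← hu', Functor.assoc, ← hw, ← Functor.assoc])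

/-- A bundled square is a right Beck–Chevalley square. -/
def CatSquare.IsRightBC (S : CatSquare.{u}) : Prop :=
  ∃ (v'' : S.A ⥤ S.A') (w'' : S.B ⥤ S.B') (adjv : v'' ⊣ S.v) (adjw : w'' ⊣ S.w),
    IsIso (baseChangeL adjv adjw S.α)

/-- The functor `A/b ⥤ B/b` induced by `u : A ⥤ B`, in terms of comma categories. -/
def commaSliceInduced {A B : Type u} [SmallCategory A] [SmallCategory B] (u : A ⥤ B)
    (b : B) : Comma u (Functor.fromPUnit.{u} b) ⥤ Comma (𝟭 B) (Functor.fromPUnit.{u} b) where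
  obj x := { left := u.obj x.left, right := x.right, hom := x.hom }
  map {x y} f := { left := u.map f.left, right := f.right, w := by simp [f.w] }

/-- The cartesian square expressing `A/b` as the pullback of `u : A ⥤ B` along the
forgetful functor `B/b ⥤ B`. -/
def sliceCartSquare {A B : Type u} [SmallCategory A] [SmallCategory B] (u : A ⥤ B)
    (b : B) : CatSquare.{u} :=
  ⟨u, commaSliceInduced u b, Comma.fst u (Functor.fromPUnit.{u} b),
    Comma.fst (𝟭 B) (Functor.fromPUnit.{u} b),
    𝟙 (Comma.fst u (Functor.fromPUnit.{u} b) ⋙ u)⟩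


section St18Aux

section DF
variable {B' B : Type u} [SmallCategory B'] [SmallCategory B] {w : B' ⥤ B}
  (hw : IsDiscreteFibration w)

/-- Choice of a lift along a discrete fibration. -/
noncomputable def dlift18 {b : B} {b'' : B'} (g : b ⟶ w.obj b'') : Σ b₀ : B', b₀ ⟶ b'' :=
  (hw b'' b g).exists.choose

lemma dlift18_obj {b : B} {b'' : B'} (g : b ⟶ w.obj b'') : w.obj (dlift18 hw g).1 = b :=
  (hw b'' b g).exists.choose_spec.choose

lemma dlift18_map {b : B} {b'' : B'} (g : b ⟶ w.obj b'') :
    w.map (dlift18 hw g).2 = eqToHom (dlift18_obj hw g) ≫ g :=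
  (hw b'' b g).exists.choose_spec.choose_spec

lemma dlift18_unique {b : B} {b'' : B'} (g : b ⟶ w.obj b'') (p : Σ b₀ : B', b₀ ⟶ b'')
    (he : w.obj p.1 = b) (hm : w.map p.2 = eqToHom he ≫ g) : p = dlift18 hw g :=
  (hw b'' b g).unique ⟨he, hm⟩ ⟨dlift18_obj hw g, dlift18_map hw g⟩

lemma df18_hom_ext (hw : IsDiscreteFibration w) {c d : B'} (q q' : c ⟶ d)
    (him : w.map q = w.map q') : q = q' := by
  have h1 : (⟨c, q⟩ : Σ b₀ : B', b₀ ⟶ d) = dlift18 hw (w.map q') :=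
    dlift18_unique hw _ _ rfl (by simpa using him)
  have h2 : (⟨c, q'⟩ : Σ b₀ : B', b₀ ⟶ d) = dlift18 hw (w.map q') :=
    dlift18_unique hw _ _ rfl (by simp)
  have := h1.trans h2.symm
  simpa using this

end DF

lemma sigma18_hom_eq {X : Type u} [SmallCategory X] {d : X} {p q : Σ x : X, x ⟶ d}
    (hs : p = q) : p.2 = eqToHom (congrArg Sigma.fst hs) ≫ q.2 := by
  subst hs; simp

lemma eqToHom18_cancel {C : Type u} [Category C] {X Y Z : C} (p : X = Y) (q : Y = X)
    (g : X ⟶ Z) : g = eqToHom p ≫ eqToHom q ≫ g := by simp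

lemma eqToHom18_id {C : Type u} [Category C] {X Y : C} (p : X = X) (g : X ⟶ Y) :
    g = eqToHom p ≫ g := by simp

lemma eqToHom18_merge {C : Type u} [Category C] {X Y Z W : C} (p : X = Z) (q : X = Y)
    (r : Y = Z) (g : Z ⟶ W) : eqToHom p ≫ g = eqToHom q ≫ eqToHom r ≫ g := by simp

lemma eqToHom18_tri {C : Type u} [Category C] {X Y Z Z' W : C} (a : X = Y) (q : Y ⟶ Z)
    (b : Z = Z') (c : Z' = Z) (dz : Z ⟶ W) (dy : Y ⟶ W) (e : X = Y) (hq : q ≫ dz = dy) :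
    (eqToHom a ≫ q ≫ eqToHom b) ≫ eqToHom c ≫ dz = (eqToHom e ≫ dy) ≫ 𝟙 W := by
  subst hq; simp

lemma eqToHom18_map1 {C D : Type u} [Category C] [Category D] (F : C ⥤ D) {X Y : D}
    {P Q : C} {W : D} (p : X = F.obj P) (q : P = Q) (r : F.obj Q = Y) (s : X = Y)
    (g : Y ⟶ W) : eqToHom p ≫ F.map (eqToHom q) ≫ eqToHom r ≫ g = eqToHom s ≫ g := by
  subst q; simp

lemma eqToHom18_map2 {C D : Type u} [Category C] [Category D] (F : C ⥤ D) {Y Y' : D}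
    {P Q P' Q' : C} (a : F.obj P' = Y) (b : Y = F.obj P) (g : P ⟶ Q) (c : F.obj Q = Y')
    (d : Y' = F.obj Q') (e : P' = P) (f : Q = Q') :
    eqToHom a ≫ eqToHom b ≫ F.map g ≫ eqToHom c ≫ eqToHom d =
      F.map (eqToHom e ≫ g ≫ eqToHom f) := by
  subst e f; simp [eqToHom_map]

lemma eqToHom18_sq {C : Type u} [Category C] {X Y Z W : C} (p : X = Y) (q : Y = X)
    (g : X ⟶ Z) (r : Z = W) (s : W = Z) :
    g = eqToHom p ≫ eqToHom q ≫ (g ≫ eqToHom r) ≫ eqToHom s := by simp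

lemma eqToHom18_four {C : Type u} [Category C] {X Y Z W V : C} (a : X = Y) (b : Y = Z)
    (c : Z = W) (d : W = X) (g : X ⟶ V) :
    g = eqToHom a ≫ eqToHom b ≫ eqToHom c ≫ eqToHom d ≫ g := by simp

lemma comma18_obj_ext {A B T : Type u} [SmallCategory A] [SmallCategory B] [SmallCategory T]
    {F : A ⥤ T} {G : B ⥤ T} (x y : Comma F G) (h1 : x.left = y.left) (h2 : x.right = y.right)
    (h3 : x.hom ≫ eqToHom (congrArg G.obj h2) = eqToHom (congrArg F.obj h1) ≫ y.hom) : x = y := by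
  obtain ⟨xl, xr, xh⟩ := x; obtain ⟨yl, yr, yh⟩ := y
  dsimp at h1 h2; cases h1; cases h2
  simp only [eqToHom_refl, Category.comp_id, Category.id_comp] at h3
  rw [h3]

lemma comma18_eqToHom_left {A B T : Type u} [SmallCategory A] [SmallCategory B] [SmallCategory T]
    {F : A ⥤ T} {G : B ⥤ T} {x y : Comma F G} (e : x = y) :
    (eqToHom e).left = eqToHom (congrArg Comma.left e) := by subst e; rfl

lemma comma18_eqToHom_right {A B T : Type u} [SmallCategory A] [SmallCategory B] [SmallCategory T]
    {F : A ⥤ T} {G : B ⥤ T} {x y : Comma F G} (e : x = y) :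
    (eqToHom e).right = eqToHom (congrArg Comma.right e) := by subst e; rfl

lemma punit18_functor_ext {C : Type u} [SmallCategory C] (F G : C ⥤ PtCat.{u}) : F = G :=
  CategoryTheory.Functor.ext (fun _ => Subsingleton.elim _ _) (fun _ _ _ => Subsingleton.elim _ _)

lemma catPullback18_obj_ext {A B B' : Type u} [SmallCategory A] [SmallCategory B]
    [SmallCategory B'] {u : A ⥤ B} {w : B' ⥤ B} (x y : CatPullback u w)
    (h1 : x.fst = y.fst) (h2 : x.snd = y.snd) : x = y := by
  obtain ⟨xf, xs, xe⟩ := x; obtain ⟨yf, ys, ye⟩ := y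
  dsimp at h1 h2; cases h1; cases h2; rfl

lemma catPullback18_comp_fst {A B B' : Type u} [SmallCategory A] [SmallCategory B]
    [SmallCategory B'] {u : A ⥤ B} {w : B' ⥤ B} {x y z : CatPullback u w}
    (f : x ⟶ y) (g : y ⟶ z) : (f ≫ g).1.1 = f.1.1 ≫ g.1.1 := rfl

lemma catPullback18_comp_snd {A B B' : Type u} [SmallCategory A] [SmallCategory B]
    [SmallCategory B'] {u : A ⥤ B} {w : B' ⥤ B} {x y z : CatPullback u w}
    (f : x ⟶ y) (g : y ⟶ z) : (f ≫ g).1.2 = f.1.2 ≫ g.1.2 := rfl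

lemma catPullback18_id_fst {A B B' : Type u} [SmallCategory A] [SmallCategory B]
    [SmallCategory B'] {u : A ⥤ B} {w : B' ⥤ B} (x : CatPullback u w) :
    (𝟙 x : x ⟶ x).1.1 = 𝟙 x.fst := rfl

lemma catPullback18_id_snd {A B B' : Type u} [SmallCategory A] [SmallCategory B]
    [SmallCategory B'] {u : A ⥤ B} {w : B' ⥤ B} (x : CatPullback u w) :
    (𝟙 x : x ⟶ x).1.2 = 𝟙 x.snd := rfl

lemma catPullback18_eqToHom_fst {A B B' : Type u} [SmallCategory A] [SmallCategory B]
    [SmallCategory B'] {u : A ⥤ B} {w : B' ⥤ B} {x y : CatPullback u w} (e : x = y) :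
    (eqToHom e).1.1 = eqToHom (congrArg CatPullback.fst e) := by subst e; rfl

lemma catPullback18_eqToHom_snd {A B B' : Type u} [SmallCategory A] [SmallCategory B]
    [SmallCategory B'] {u : A ⥤ B} {w : B' ⥤ B} {x y : CatPullback u w} (e : x = y) :
    (eqToHom e).1.2 = eqToHom (congrArg CatPullback.snd e) := by subst e; rfl

section Main

variable {A A' B B' : Type u} [SmallCategory A] [SmallCategory A']
  [SmallCategory B] [SmallCategory B']
  {u : A ⥤ B} {u' : A' ⥤ B'} {v : A' ⥤ A} {w : B' ⥤ B} {h : v ⋙ u = u' ⋙ w}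
  {G : CatPullback u w ⥤ A'}

lemma pb18_obj_fst (hGr : G ⋙ toPullback u u' v w h = 𝟭 _) (pb : CatPullback u w) :
    u'.obj (G.obj pb) = pb.fst :=
  congrArg CatPullback.fst (Functor.congr_obj hGr pb)

lemma pb18_obj_snd (hGr : G ⋙ toPullback u u' v w h = 𝟭 _) (pb : CatPullback u w) :
    v.obj (G.obj pb) = pb.snd :=
  congrArg CatPullback.snd (Functor.congr_obj hGr pb)

lemma pb18_map_fst (hGr : G ⋙ toPullback u u' v w h = 𝟭 _) {x y : CatPullback u w}
    (m : x ⟶ y) : u'.map (G.map m) =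
      eqToHom (pb18_obj_fst hGr x) ≫ m.1.1 ≫ eqToHom (pb18_obj_fst hGr y).symm := by
  have hh := Functor.congr_hom hGr m
  have := congrArg (Subtype.val) hh
  have h2 := congrArg Prod.fst this
  dsimp [toPullback] at h2
  rw [h2]
  simp only [catPullback18_comp_fst, catPullback18_eqToHom_fst]
  erw [catPullback18_eqToHom_fst, catPullback18_eqToHom_fst]

lemma pb18_map_snd (hGr : G ⋙ toPullback u u' v w h = 𝟭 _) {x y : CatPullback u w}
    (m : x ⟶ y) : v.map (G.map m) =
      eqToHom (pb18_obj_snd hGr x) ≫ m.1.2 ≫ eqToHom (pb18_obj_snd hGr y).symm := by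
  have hh := Functor.congr_hom hGr m
  have := congrArg (Subtype.val) hh
  have h2 := congrArg Prod.snd this
  dsimp [toPullback] at h2
  rw [h2]
  simp only [catPullback18_comp_snd, catPullback18_eqToHom_snd]
  erw [catPullback18_eqToHom_snd, catPullback18_eqToHom_snd]


section PhiC
variable (hGl : toPullback u u' v w h ⋙ G = 𝟭 A') (hGr : G ⋙ toPullback u u' v w h = 𝟭 _)
  (hw : IsDiscreteFibration w) {b' : B'}

lemma comma18_w {y z : Comma u (Functor.fromPUnit.{u} (w.obj b'))} (f : y ⟶ z) :
    u.map f.left ≫ z.hom = y.hom := by simpa using f.w.symm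

noncomputable def phiPB18 (y : Comma u (Functor.fromPUnit.{u} (w.obj b'))) :
    CatPullback u w :=
  ⟨(dlift18 hw y.hom).1, y.left, dlift18_obj hw y.hom⟩

noncomputable def phiR18 {y z : Comma u (Functor.fromPUnit.{u} (w.obj b'))} (f : y ⟶ z) :
    Σ b₀ : B', b₀ ⟶ (dlift18 hw z.hom).1 :=
  dlift18 hw (eqToHom (dlift18_obj hw y.hom) ≫ u.map f.left ≫ eqToHom (dlift18_obj hw z.hom).symm)

lemma phiSig18 {y z : Comma u (Functor.fromPUnit.{u} (w.obj b'))} (f : y ⟶ z) :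
    (⟨(phiR18 hw f).1, (phiR18 hw f).2 ≫ (dlift18 hw z.hom).2⟩ : Σ b₀ : B', b₀ ⟶ b') =
      dlift18 hw y.hom := by
  refine dlift18_unique hw y.hom _ ((dlift18_obj hw _).trans (dlift18_obj hw y.hom)) ?_
  show w.map ((phiR18 hw f).2 ≫ (dlift18 hw z.hom).2) = _
  rw [Functor.map_comp]
  unfold phiR18
  rw [dlift18_map, dlift18_map]
  simp [comma18_w f]

noncomputable def phiQ18 {y z : Comma u (Functor.fromPUnit.{u} (w.obj b'))} (f : y ⟶ z) :
    (dlift18 hw y.hom).1 ⟶ (dlift18 hw z.hom).1 :=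
  eqToHom (congrArg Sigma.fst (phiSig18 hw f)).symm ≫ (phiR18 hw f).2

lemma phiQ18_w {y z : Comma u (Functor.fromPUnit.{u} (w.obj b'))} (f : y ⟶ z) :
    w.map (phiQ18 hw f) =
      eqToHom (dlift18_obj hw y.hom) ≫ u.map f.left ≫ eqToHom (dlift18_obj hw z.hom).symm := by
  unfold phiQ18
  rw [Functor.map_comp, eqToHom_map]
  unfold phiR18
  rw [dlift18_map]
  simp

lemma phiQ18_tri {y z : Comma u (Functor.fromPUnit.{u} (w.obj b'))} (f : y ⟶ z) :
    phiQ18 hw f ≫ (dlift18 hw z.hom).2 = (dlift18 hw y.hom).2 := by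
  have hs := sigma18_hom_eq (phiSig18 hw f)
  dsimp at hs
  unfold phiQ18
  rw [Category.assoc, hs]
  simp

noncomputable def phiM18 {y z : Comma u (Functor.fromPUnit.{u} (w.obj b'))} (f : y ⟶ z) :
    phiPB18 hw y ⟶ phiPB18 hw z :=
  ⟨(phiQ18 hw f, f.left), by
    show w.map (phiQ18 hw f) ≫ eqToHom (dlift18_obj hw z.hom) = _
    rw [phiQ18_w]
    simp [phiPB18]⟩

lemma phiM18_id (y : Comma u (Functor.fromPUnit.{u} (w.obj b'))) :
    phiM18 hw (𝟙 y) = 𝟙 (phiPB18 hw y) := by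
  apply Subtype.ext
  refine Prod.ext ?_ ?_
  · show phiQ18 hw (𝟙 y) = (𝟙 (phiPB18 hw y) : _ ⟶ _).1.1
    rw [catPullback18_id_fst]
    refine df18_hom_ext hw _ _ ?_
    rw [phiQ18_w]
    simp [phiPB18]
  · show (𝟙 y : y ⟶ y).left = (𝟙 (phiPB18 hw y) : _ ⟶ _).1.2
    rw [catPullback18_id_snd]
    simp [phiPB18]

lemma phiM18_comp {x y z : Comma u (Functor.fromPUnit.{u} (w.obj b'))} (f : x ⟶ y) (g : y ⟶ z) :
    phiM18 hw (f ≫ g) = phiM18 hw f ≫ phiM18 hw g := by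
  apply Subtype.ext
  refine Prod.ext ?_ ?_
  · show phiQ18 hw (f ≫ g) = (phiM18 hw f ≫ phiM18 hw g).1.1
    rw [catPullback18_comp_fst]
    show _ = phiQ18 hw f ≫ phiQ18 hw g
    refine df18_hom_ext hw _ _ ?_
    rw [phiQ18_w, Functor.map_comp, phiQ18_w, phiQ18_w]
    simp
  · show (f ≫ g).left = (phiM18 hw f ≫ phiM18 hw g).1.2
    rw [catPullback18_comp_snd]
    show _ = f.left ≫ g.left
    simp

noncomputable def Phi18 : Comma u (Functor.fromPUnit.{u} (w.obj b')) ⥤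
    Comma u' (Functor.fromPUnit.{u} b') where
  obj y := ⟨G.obj (phiPB18 hw y), ⟨PUnit.unit⟩,
    eqToHom (pb18_obj_fst hGr (phiPB18 hw y)) ≫ (dlift18 hw y.hom).2⟩
  map {y z} f := ⟨G.map (phiM18 hw f), 𝟙 _, by
    have hm := pb18_map_fst hGr (phiM18 hw f)
    have h1 : (phiM18 hw f).1.1 = phiQ18 hw f := rfl
    rw [h1] at hm
    dsimp
    rw [hm]
    exact eqToHom18_tri _ _ _ _ _ _ _ (phiQ18_tri hw f)⟩
  map_id y := by
    apply CommaMorphism.ext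
    · show G.map (phiM18 hw (𝟙 y)) = 𝟙 _
      rw [phiM18_id, G.map_id]
    · exact Subsingleton.elim _ _
  map_comp f g := by
    apply CommaMorphism.ext
    · show G.map (phiM18 hw (_ ≫ _)) = G.map (phiM18 hw _) ≫ G.map (phiM18 hw _)
      rw [phiM18_comp, G.map_comp]
    · exact Subsingleton.elim _ _


/-- The easy comparison functor `A'/b' ⥤ A/w(b')`. -/
def Psi18 : Comma u' (Functor.fromPUnit.{u} b') ⥤ Comma u (Functor.fromPUnit.{u} (w.obj b')) where
  obj x := ⟨v.obj x.left, x.right, eqToHom (Functor.congr_obj h x.left) ≫ w.map x.hom⟩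
  map {x z} f := ⟨v.map f.left, f.right, by
    have hf : u'.map f.left ≫ z.hom = x.hom := by simpa using f.w.symm
    have hc : u.map (v.map f.left) = eqToHom (Functor.congr_obj h x.left) ≫
        w.map (u'.map f.left) ≫ eqToHom (Functor.congr_obj h z.left).symm :=
      Functor.congr_hom h f.left
    dsimp
    rw [hc]
    simp [← Functor.map_comp, hf]⟩
  map_id x := by
    apply CommaMorphism.ext <;> simp
  map_comp f g := by
    apply CommaMorphism.ext <;> simp

lemma phi_psi18 :
    Phi18 hGr hw ⋙ Psi18 (h := h) (b' := b') = 𝟭 (Comma u (Functor.fromPUnit.{u} (w.obj b'))) := by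
  refine CategoryTheory.Functor.ext (fun y => ?_) (fun y z f => ?_)
  · refine comma18_obj_ext _ _ (pb18_obj_snd hGr (phiPB18 hw y)) (Subsingleton.elim _ _) ?_
    show (eqToHom _ ≫ w.map (eqToHom _ ≫ (dlift18 hw y.hom).2)) ≫ _ = _
    simp only [Functor.map_comp, eqToHom_map, dlift18_map]
    simp [commaObjSquare, commaSquare]
    exact eqToHom18_map1 w _ _ _ _ _
  · apply CommaMorphism.ext
    · show v.map (G.map (phiM18 hw f)) = _
      rw [pb18_map_snd hGr]
      have h2 : (phiM18 hw f).1.2 = f.left := rfl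
      rw [h2]
      simp [comma18_eqToHom_left]
      rfl
    · exact Subsingleton.elim _ _

lemma psi18_sig (x : Comma u' (Functor.fromPUnit.{u} b')) :
    (⟨u'.obj x.left, x.hom⟩ : Σ b₀ : B', b₀ ⟶ b') =
      dlift18 hw (((Psi18 (h := h)).obj x).hom) := by
  refine dlift18_unique hw _ _ (Functor.congr_obj h x.left).symm ?_
  show w.map x.hom = _ ≫ eqToHom (Functor.congr_obj h x.left) ≫ w.map x.hom
  exact eqToHom18_cancel _ _ _

lemma psi18_pb (x : Comma u' (Functor.fromPUnit.{u} b')) :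
    phiPB18 hw (((Psi18 (h := h)).obj x)) = (toPullback u u' v w h).obj x.left := by
  refine catPullback18_obj_ext _ _ ?_ rfl
  exact (congrArg Sigma.fst (psi18_sig hw x)).symm

lemma psi18_m {x z : Comma u' (Functor.fromPUnit.{u} b')} (f : x ⟶ z) :
    phiM18 hw ((Psi18 (h := h)).map f) =
      eqToHom (psi18_pb hw x) ≫ (toPullback u u' v w h).map f.left ≫
        eqToHom (psi18_pb hw z).symm := by
  apply Subtype.ext
  refine Prod.ext ?_ ?_
  · show phiQ18 hw ((Psi18 (h := h)).map f) = _
    rw [catPullback18_comp_fst, catPullback18_comp_fst, catPullback18_eqToHom_fst,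
      catPullback18_eqToHom_fst]
    refine df18_hom_ext hw _ _ ?_
    rw [phiQ18_w]
    have hc : u.map (v.map f.left) = eqToHom (Functor.congr_obj h x.left) ≫
        w.map (u'.map f.left) ≫ eqToHom (Functor.congr_obj h z.left).symm :=
      Functor.congr_hom h f.left
    show eqToHom _ ≫ u.map (v.map f.left) ≫ eqToHom _ = _
    rw [hc]
    have h11 : ((toPullback u u' v w h).map f.left).1.1 = u'.map f.left := rfl
    rw [h11]
    simp [eqToHom_map]
    exact eqToHom18_map2 _ _ _ _ _ _ _ _
  · show v.map f.left = _
    rw [catPullback18_comp_snd, catPullback18_comp_snd, catPullback18_eqToHom_snd,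
      catPullback18_eqToHom_snd]
    show _ = eqToHom _ ≫ v.map f.left ≫ eqToHom _
    simp
    exact eqToHom18_id _ _

include hGl in
lemma psi_phi18 :
    Psi18 (h := h) (b' := b') ⋙ Phi18 hGr hw = 𝟭 (Comma u' (Functor.fromPUnit.{u} b')) := by
  refine CategoryTheory.Functor.ext (fun x => ?_) (fun x z f => ?_)
  · refine comma18_obj_ext _ _
      ((congrArg G.obj (psi18_pb hw x)).trans (Functor.congr_obj hGl x.left))
      (Subsingleton.elim _ _) ?_
    have hs := sigma18_hom_eq (psi18_sig (h := h) hw x)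
    dsimp at hs
    dsimp only [Functor.comp_obj, Functor.id_obj, Phi18]
    rw [hs]
    simp
    exact eqToHom18_merge _ _ _ _
  · apply CommaMorphism.ext
    · show G.map (phiM18 hw ((Psi18 (h := h)).map f)) = _
      rw [psi18_m hw f, G.map_comp, G.map_comp, eqToHom_map, eqToHom_map]
      have hg : G.map ((toPullback u u' v w h).map f.left) =
          eqToHom (Functor.congr_obj hGl x.left) ≫ f.left ≫
            eqToHom (Functor.congr_obj hGl z.left).symm :=
        Functor.congr_hom hGl f.left
      rw [hg]
      simp [comma18_eqToHom_left]
      rfl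
    · exact Subsingleton.elim _ _

end PhiC

end Main

end St18Aux


theorem statement18 (Q : CatSquare.{u} → Prop)
    (hiso : ∀ S T : CatSquare.{u}, S.Isomorphic T → Q S → Q T)
    (cs3h : LocalDescent Q)
    (ci2g : ∀ {A B : Type u} [SmallCategory A] [SmallCategory B] (F : A ⥤ B) (b : B),
      Q (commaObjSquare F b)) :
    ∀ {A A' B B' : Type u} [SmallCategory A] [SmallCategory A'] [SmallCategory B]
      [SmallCategory B'] (u : A ⥤ B) (u' : A' ⥤ B') (v : A' ⥤ A) (w : B' ⥤ B)
      (h : v ⋙ u = u' ⋙ w), IsCatIso (toPullback u u' v w h) → IsDiscreteFibration w →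
      Q ⟨u, u', v, w, eqToHom h⟩ := by
  intro A A' B B' iA iA' iB iB' u u' v w h hpb hdf
  obtain ⟨G, hGl, hGr⟩ := hpb
  apply cs3h
  intro b'
  refine hiso (commaObjSquare u (w.obj b')) _
    ⟨Phi18 hGr hdf, 𝟭 A, 𝟭 PtCat.{u}, 𝟭 B,
      ⟨Psi18 (h := h), phi_psi18 hGr hdf, psi_phi18 hGl hGr hdf⟩,
      ⟨𝟭 A, rfl, rfl⟩, ⟨𝟭 _, rfl, rfl⟩, ⟨𝟭 B, rfl, rfl⟩,
      ?_, rfl, punit18_functor_ext _ _, ?_, ?_⟩ (ci2g u (w.obj b'))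
  · -- hv
    refine CategoryTheory.Functor.ext (fun y => ?_) (fun y z f => ?_)
    · exact (pb18_obj_snd hGr (phiPB18 hdf y)).symm
    · show f.left = _
      have h2 : v.map (G.map (phiM18 hdf f)) =
          eqToHom (pb18_obj_snd hGr _) ≫ (phiM18 hdf f).1.2 ≫ eqToHom (pb18_obj_snd hGr _).symm :=
        pb18_map_snd hGr _
      have h3 : (phiM18 hdf f).1.2 = f.left := rfl
      rw [h3] at h2
      show _ = eqToHom _ ≫ v.map (G.map (phiM18 hdf f)) ≫ eqToHom _
      rw [h2]
      simp
      exact eqToHom18_sq _ _ _ _ _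
  · -- hw
    refine CategoryTheory.Functor.ext (fun x => rfl) (fun x y f => ?_)
    simp [commaObjSquare, commaSquare]
    show 𝟙 _ = eqToHom _ ≫ w.map (𝟙 b') ≫ eqToHom _
    simp
    exact (eqToHom_refl _ _).symm
  · -- 2-cell
    apply NatTrans.ext
    funext y
    simp only [NatTrans.comp_app, Functor.whiskerRight_app, Functor.whiskerLeft_app, eqToHom_app,
      hcomp2cell, Phi18, Comma.natTrans_app, Functor.id_map]
    erw [Functor.whiskerRight_app, Functor.whiskerLeft_app, NatTrans.comp_app, Functor.whiskerLeft_app, Functor.whiskerRight_app, Comma.natTrans_app, Functor.id_map]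
    erw [Functor.map_comp, eqToHom_map, dlift18_map]
    simp [commaObjSquare, commaSquare]
    erw [eqToHom_app]
    exact eqToHom18_four _ _ _ _ _

end Paper
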